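/- Stability of the Bellman optimality equation. Density-MDP setup with μ(S) < ∞. Let 1 ≤ p ≤ q ≤ ∞ and set C_{P,p} := sup_{(s,a)} ‖P(s,a,·)‖_{L^{p/(p−1)}(μ)} (L^∞ norm for p = 1, L^1 norm for p = ∞). Assume γ·C_{P,p} < 1 and γ·C_{P,p}·(|A|·μ(S))^{1/p} < 1 (the latter is the paper's condition p ≥ log(|A|·μ(S)) / log(1/(γ C_{P,p})) made strict). Let Q* : S × A → ℝ be measurable with T_B Q* = Q* pointwise, and let Q : S × A → ℝ be measurable with Q − Q* ∈ L^p(S × A) and T_B Q − Q ∈ L^q(S × A). Then ‖Q − Q*‖_p ≤ (|A|·μ(S))^{1/p − 1/q} / (1 − γ·C_{P,p}·(|A|·μ(S))^{1/p}) · ‖T_B Q − Q‖_q. In particular the equation T_B Q = Q is (L^q, L^p)-stable. -/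

import Mathlib

open MeasureTheory
open scoped ENNReal

private lemma stmt6_sup_sub_sup_abs_le {A : Type*} [Fintype A] [Nonempty A] (f g : A → ℝ) :
    |(⨆ a, f a) - ⨆ a, g a| ≤ ⨆ a, |f a - g a| := by
  have hb : ∀ h : A → ℝ, BddAbove (Set.range h) := fun h => (Set.finite_range h).bddAbove
  have key : ∀ f g : A → ℝ, (⨆ a, f a) - (⨆ a, g a) ≤ ⨆ a, |f a - g a| := by
    intro f g
    rw [sub_le_iff_le_add]
    refine ciSup_le fun a => ?_
    have h1 : f a - g a ≤ ⨆ a, |f a - g a| := (le_abs_self _).trans (le_ciSup (f := fun a => |f a - g a|) (hb _) a)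
    have h2 : g a ≤ ⨆ a, g a := le_ciSup (hb _) a
    linarith
  rw [abs_sub_le_iff]
  refine ⟨key f g, (key g f).trans (le_of_eq ?_)⟩
  congr 1; funext a; rw [abs_sub_comm]

private lemma stmt6_ae_count {A : Type*} [MeasurableSpace A] [MeasurableSingletonClass A]
    {P : A → Prop} (h : ∀ᵐ a ∂(Measure.count : Measure A), P a) : ∀ a, P a := by
  have h0 : Measure.count {a | ¬ P a} = 0 := h
  have := Measure.count_eq_zero_iff.mp h0
  intro a
  by_contra hc
  exact absurd (Set.eq_empty_iff_forall_notMem.mp this a) (by simpa using hc)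

private lemma stmt6_eLpNorm_sup_le {S A : Type*} [MeasurableSpace S] [Fintype A] [Nonempty A]
    [MeasurableSpace A] [MeasurableSingletonClass A] (μ : Measure S) (p : ℝ≥0∞)
    (F : S × A → ℝ) (hF : Measurable F) :
    eLpNorm (fun s => ⨆ a, |F (s, a)|) p μ ≤ eLpNorm F p (μ.prod Measure.count) := by
  have hattain : ∀ s : S, ∃ a₀ : A, (⨆ a, |F (s, a)|) = |F (s, a₀)| := by
    intro s
    obtain ⟨a₀, ha₀⟩ := Finite.exists_max (fun a => |F (s, a)|)
    exact ⟨a₀, le_antisymm (ciSup_le ha₀) (le_ciSup (f := fun a => |F (s, a)|) ((Set.finite_range _).bddAbove) a₀)⟩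
  by_cases hp0 : p = 0
  · simp [hp0]
  by_cases hptop : p = ∞
  · subst hptop
    rw [eLpNorm_exponent_top, eLpNorm_exponent_top]
    set M := eLpNormEssSup F (μ.prod Measure.count) with hM
    have hae := enorm_ae_le_eLpNormEssSup F (μ.prod Measure.count)
    have hae' : ∀ᵐ s ∂μ, ∀ a, (‖F (s, a)‖₊ : ℝ≥0∞) ≤ M := by
      filter_upwards [Measure.ae_ae_of_ae_prod hae] with s hs using stmt6_ae_count hs
    refine essSup_le_of_ae_le _ ?_
    filter_upwards [hae'] with s hs
    obtain ⟨a₀, ha₀⟩ := hattain s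
    calc (‖⨆ a, |F (s, a)|‖₊ : ℝ≥0∞) = (‖F (s, a₀)‖₊ : ℝ≥0∞) := by rw [ha₀]; simp [Real.nnnorm_abs]
      _ ≤ M := hs a₀
  · have hpr : 0 < p.toReal := ENNReal.toReal_pos hp0 hptop
    rw [eLpNorm_eq_lintegral_rpow_enorm_toReal hp0 hptop, eLpNorm_eq_lintegral_rpow_enorm_toReal hp0 hptop]
    refine ENNReal.rpow_le_rpow ?_ (by positivity)
    have hFm : Measurable fun x : S × A => ‖F x‖ₑ ^ p.toReal :=
      (hF.enorm).pow_const _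
    rw [lintegral_prod _ hFm.aemeasurable]
    refine lintegral_mono fun s => ?_
    rw [lintegral_count, tsum_fintype]
    obtain ⟨a₀, ha₀⟩ := hattain s
    calc (‖⨆ a, |F (s, a)|‖₊ : ℝ≥0∞) ^ p.toReal = (‖F (s, a₀)‖₊ : ℝ≥0∞) ^ p.toReal := by
          rw [ha₀]; simp [Real.nnnorm_abs]
      _ ≤ ∑ a : A, (‖F (s, a)‖₊ : ℝ≥0∞) ^ p.toReal :=
          Finset.single_le_sum (f := fun a => (‖F (s, a)‖₊ : ℝ≥0∞) ^ p.toReal) (fun a _ => by simp) (Finset.mem_univ a₀)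

private lemma stmt6_measurable_csup {S A : Type*} [MeasurableSpace S] [Fintype A] [Nonempty A]
    {f : S → A → ℝ} (hf : ∀ a, Measurable (fun s => f s a)) :
    Measurable (fun s => ⨆ a, f s a) := by
  have h : (fun s => ⨆ a, f s a)
      = Finset.univ.sup' Finset.univ_nonempty (fun a s => f s a) := by
    funext s
    rw [Finset.sup'_apply, Finset.sup'_univ_eq_ciSup]
  rw [h]
  exact Finset.measurable_sup' Finset.univ_nonempty (fun a _ => hf a)

theorem stmt6 {S : Type*} [MeasurableSpace S] (μ : Measure S) [IsFiniteMeasure μ]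
    {A : Type*} [Fintype A] [Nonempty A] [MeasurableSpace A] [MeasurableSingletonClass A]
    (r : S → A → ℝ) (hr : ∀ a, Measurable (fun s => r s a))
    (γ : ℝ) (hγ0 : 0 < γ) (hγ1 : γ < 1)
    (P : S → A → S → ℝ)
    (hPmeas : ∀ a, Measurable (fun x : S × S => P x.1 a x.2))
    (hPnonneg : ∀ s a s', 0 ≤ P s a s')
    (hPint : ∀ s a, ∫ s', P s a s' ∂μ = 1)
    (p q p' : ℝ≥0∞) (hp : 1 ≤ p) (hpq : p ≤ q) (hp' : 1/p + 1/p' = 1)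
    (C : ℝ≥0∞) (hC : C = ⨆ s, ⨆ a, eLpNorm (fun s' => P s a s') p' μ)
    (h1 : ENNReal.ofReal γ * C < 1)
    (h2 : ENNReal.ofReal γ * C * ((Fintype.card A : ℝ≥0∞) * μ Set.univ) ^ (1/p).toReal < 1)
    (Qstar Q : S → A → ℝ)
    (hQstarMeas : ∀ a, Measurable (fun s => Qstar s a))
    (hQMeas : ∀ a, Measurable (fun s => Q s a))
    (hfix : ∀ s a, r s a + γ * ∫ s', (⨆ a', Qstar s' a') * P s a s' ∂μ = Qstar s a)
    (hmemp : MemLp (fun x : S × A => Q x.1 x.2 - Qstar x.1 x.2) p (μ.prod Measure.count))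
    (hmemq : MemLp
      (fun x : S × A =>
        (r x.1 x.2 + γ * ∫ s', (⨆ a', Q s' a') * P x.1 x.2 s' ∂μ) - Q x.1 x.2)
      q (μ.prod Measure.count)) :
    eLpNorm (fun x : S × A => Q x.1 x.2 - Qstar x.1 x.2) p (μ.prod Measure.count) ≤
      ((Fintype.card A : ℝ≥0∞) * μ Set.univ) ^ (1/p - 1/q).toReal /
        (1 - ENNReal.ofReal γ * C * ((Fintype.card A : ℝ≥0∞) * μ Set.univ) ^ (1/p).toReal) *
      eLpNorm
        (fun x : S × A =>
          (r x.1 x.2 + γ * ∫ s', (⨆ a', Q s' a') * P x.1 x.2 s' ∂μ) - Q x.1 x.2)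
        q (μ.prod Measure.count) := by
  classical
  have hp0 : p ≠ 0 := fun h => by simp [h] at hp
  set ν : Measure (S × A) := μ.prod Measure.count with hνdef
  set E : S × A → ℝ := fun x => Q x.1 x.2 - Qstar x.1 x.2 with hEdef
  set B : S × A → ℝ := fun x =>
    (r x.1 x.2 + γ * ∫ s', (⨆ a', Q s' a') * P x.1 x.2 s' ∂μ) - Q x.1 x.2 with hBdef
  set K : ℝ≥0∞ := (Fintype.card A : ℝ≥0∞) * μ Set.univ with hKdef
  have hγe0 : (ENNReal.ofReal γ) ≠ 0 := by simp [ENNReal.ofReal_eq_zero, not_le, hγ0]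
  have hCfin : C ≠ ∞ := by
    intro h
    rw [h, ENNReal.mul_top hγe0] at h1
    exact absurd h1 (by simp)
  have hEmeas : Measurable E :=
    measurable_from_prod_countable_left fun a => (hQMeas a).sub (hQstarMeas a)
  set NE := eLpNorm E p ν with hNE
  have hNEfin : NE ≠ ∞ := hmemp.2.ne
  -- the value function gap
  set g : S → ℝ := fun s' => (⨆ a', Q s' a') - ⨆ a', Qstar s' a' with hgdef
  have hgmeas : Measurable g :=
    (stmt6_measurable_csup hQMeas).sub (stmt6_measurable_csup hQstarMeas)
  have hgle : eLpNorm g p μ ≤ NE := by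
    have hmono : ∀ s, ‖g s‖ ≤ ‖(fun s => ⨆ a, |E (s, a)|) s‖ := by
      intro s
      have h1 : |g s| ≤ ⨆ a, |E (s, a)| := stmt6_sup_sub_sup_abs_le _ _
      have h2 : (0:ℝ) ≤ ⨆ a, |E (s, a)| := (abs_nonneg _).trans h1
      simpa [Real.norm_eq_abs, abs_of_nonneg h2] using h1
    calc eLpNorm g p μ ≤ eLpNorm (fun s => ⨆ a, |E (s, a)|) p μ := eLpNorm_mono hmono
      _ ≤ eLpNorm E p ν := stmt6_eLpNorm_sup_le μ p E hEmeas
  have hCNfin : C * NE ≠ ∞ := ENNReal.mul_ne_top hCfin hNEfin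
  have hPsec : ∀ s a, Measurable fun s' => P s a s' := fun s a =>
    (hPmeas a).comp measurable_prodMk_left
  have hHold : ∀ s a, ∫⁻ s', (‖P s a s' * g s'‖₊ : ℝ≥0∞) ∂μ ≤ C * NE := by
    intro s a
    have h1 : (1:ℝ≥0∞)/1 = 1/p' + 1/p := by rw [add_comm, hp']; simp
    have h2 := eLpNorm_smul_le_mul_eLpNorm (μ := μ) (f := g) (φ := fun s' => P s a s') (p := p') (q := p) (r := 1)
      hgmeas.aestronglyMeasurable (hPsec s a).aestronglyMeasurable (hpqr := ⟨by simpa only [one_div, inv_one] using h1.symm⟩)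
    have h3 : eLpNorm (fun s' => P s a s') p' μ ≤ C := by
      rw [hC]
      exact le_iSup₂ (f := fun s a => eLpNorm (fun s' => P s a s') p' μ) s a
    calc ∫⁻ s', (‖P s a s' * g s'‖₊ : ℝ≥0∞) ∂μ
        = eLpNorm ((fun s' => P s a s') • g) 1 μ := by
          rw [eLpNorm_one_eq_lintegral_enorm]; rfl
      _ ≤ eLpNorm (fun s' => P s a s') p' μ * eLpNorm g p μ := h2
      _ ≤ C * NE := mul_le_mul' h3 hgle
  have hPg_int : ∀ s a, Integrable (fun s' => P s a s' * g s') μ := by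
    intro s a
    refine ⟨((hPsec s a).mul hgmeas).aestronglyMeasurable, ?_⟩
    exact lt_of_le_of_lt (hHold s a) (lt_top_iff_ne_top.mpr hCNfin)
  -- pointwise bound on D = E + B
  set D : S × A → ℝ := fun x => E x + B x with hDdef
  have hDbound : ∀ x : S × A, ‖D x‖ ≤ γ * (C * NE).toReal := by
    rintro ⟨s, a⟩
    by_cases hQsint : Integrable (fun s' => (⨆ a', Qstar s' a') * P s a s') μ
    · have hQint : Integrable (fun s' => (⨆ a', Q s' a') * P s a s') μ := by
        have hsplit : (fun s' => (⨆ a', Q s' a') * P s a s')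
            = fun s' => P s a s' * g s' + (⨆ a', Qstar s' a') * P s a s' := by
          funext s'; simp only [hgdef]; ring
        rw [hsplit]; exact (hPg_int s a).add hQsint
      have hDval : D (s, a) = γ * ∫ s', P s a s' * g s' ∂μ := by
        have hsub : ∫ s', P s a s' * g s' ∂μ
            = (∫ s', (⨆ a', Q s' a') * P s a s' ∂μ)
              - ∫ s', (⨆ a', Qstar s' a') * P s a s' ∂μ := by
          rw [← integral_sub hQint hQsint]
          congr 1; funext s'; simp only [hgdef]; ring
        show (Q s a - Qstar s a)
            + ((r s a + γ * ∫ s', (⨆ a', Q s' a') * P s a s' ∂μ) - Q s a) = _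
        rw [hsub, ← hfix s a]; ring
      rw [hDval]
      calc ‖γ * ∫ s', P s a s' * g s' ∂μ‖ = γ * ‖∫ s', P s a s' * g s' ∂μ‖ := by
            rw [norm_mul, Real.norm_of_nonneg hγ0.le]
        _ ≤ γ * (C * NE).toReal := by
            refine mul_le_mul_of_nonneg_left ?_ hγ0.le
            have heq : ∫⁻ s', ENNReal.ofReal ‖P s a s' * g s'‖ ∂μ
                = ∫⁻ s', (‖P s a s' * g s'‖₊ : ℝ≥0∞) ∂μ := by
              simp_rw [ofReal_norm, enorm_eq_nnnorm]
            exact (norm_integral_le_lintegral_norm _).trans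
              (ENNReal.toReal_mono hCNfin (heq.trans_le (hHold s a)))
    · have hQnint : ¬ Integrable (fun s' => (⨆ a', Q s' a') * P s a s') μ := by
        intro h
        apply hQsint
        have hsplit : (fun s' => (⨆ a', Qstar s' a') * P s a s')
            = fun s' => (⨆ a', Q s' a') * P s a s' - P s a s' * g s' := by
          funext s'; simp only [hgdef]; ring
        rw [hsplit]; exact h.sub (hPg_int s a)
      have e1 := integral_undef hQnint
      have e2 := integral_undef hQsint
      have hDz : D (s, a) = 0 := by
        show (Q s a - Qstar s a)
            + ((r s a + γ * ∫ s', (⨆ a', Q s' a') * P s a s' ∂μ) - Q s a) = 0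
        rw [e1, ← hfix s a, e2]; ring
      rw [hDz]
      simpa using (by positivity : (0:ℝ) ≤ γ * (C * NE).toReal)
  have hKν : ν Set.univ = K := by
    rw [hνdef, ← Set.univ_prod_univ, Measure.prod_prod, Measure.count_univ, hKdef, mul_comm]
    simp
  have hDlp : eLpNorm D p ν ≤ (ENNReal.ofReal γ * C * K ^ (1/p).toReal) * NE := by
    have h := eLpNorm_le_of_ae_bound (μ := ν) (p := p) (ae_of_all _ hDbound)
    rw [hKν] at h
    refine h.trans (le_of_eq ?_)
    rw [ENNReal.ofReal_mul hγ0.le, ENNReal.ofReal_toReal hCNfin]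
    have hip : (1/p).toReal = p.toReal⁻¹ := by rw [one_div, ENNReal.toReal_inv]
    rw [hip]; ring
  have hBmeas : AEStronglyMeasurable B ν := hmemq.1
  have hDmeas : AEStronglyMeasurable D ν := hEmeas.aestronglyMeasurable.add hBmeas
  have htri : NE ≤ eLpNorm D p ν + eLpNorm B p ν := by
    have hEDB : NE = eLpNorm (D - B) p ν := by
      rw [hNE]; congr 1; funext x
      show E x = D x - B x
      simp only [hDdef]; ring
    rw [hEDB]
    exact eLpNorm_sub_le hDmeas hBmeas hp
  have hq0 : q ≠ 0 := fun h => hp0 (le_antisymm (h ▸ hpq) (by simp))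
  have hBemb : eLpNorm B p ν ≤ K ^ (1/p - 1/q).toReal * eLpNorm B q ν := by
    have h := eLpNorm_le_eLpNorm_mul_rpow_measure_univ hpq hBmeas (μ := ν)
    rw [hKν] at h
    have hle : 1/q ≤ 1/p := by
      rw [one_div, one_div]; exact ENNReal.inv_le_inv' hpq
    have hfin : 1/p ≠ ∞ := by
      rw [one_div]; exact ENNReal.inv_ne_top.mpr hp0
    have hexp : 1 / p.toReal - 1 / q.toReal = (1/p - 1/q).toReal := by
      rw [ENNReal.toReal_sub_of_le hle hfin, one_div, one_div, one_div, one_div,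
        ENNReal.toReal_inv, ENNReal.toReal_inv]
    rw [hexp] at h
    exact h.trans (le_of_eq (mul_comm _ _))
  set c := ENNReal.ofReal γ * C * K ^ (1/p).toReal with hc
  set NBq := eLpNorm B q ν with hNBq
  have hcf : c ≠ ∞ := (h2.trans_le le_top).ne
  have hcNE : c * NE ≠ ∞ := ENNReal.mul_ne_top hcf hNEfin
  have main : NE ≤ c * NE + K ^ (1/p - 1/q).toReal * NBq :=
    htri.trans (add_le_add hDlp hBemb)
  have hsub : NE * (1 - c) ≤ K ^ (1/p - 1/q).toReal * NBq := by
    have hne : NE * (1 - c) + c * NE = NE := by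
      rw [mul_comm c NE, ← mul_add, tsub_add_cancel_of_le h2.le, mul_one]
    have h' : NE * (1 - c) + c * NE ≤ (K ^ (1/p - 1/q).toReal * NBq) + c * NE := by
      rw [hne]; rw [add_comm] at main; exact main
    exact (ENNReal.add_le_add_iff_right hcNE).mp h'
  have h1c0 : (1 - c) ≠ 0 := fun h => absurd (tsub_eq_zero_iff_le.mp h) (not_le.mpr h2)
  have h1cfin : (1 - c) ≠ ∞ := ((tsub_le_self).trans_lt ENNReal.one_lt_top).ne
  have hrw : K ^ (1/p - 1/q).toReal / (1 - c) * NBq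
      = K ^ (1/p - 1/q).toReal * NBq / (1 - c) := by
    generalize K ^ (1/p - 1/q).toReal = X
    rw [div_eq_mul_inv, div_eq_mul_inv, mul_right_comm]
  rw [hrw]
  exact (ENNReal.le_div_iff_mul_le (Or.inl h1c0) (Or.inl h1cfin)).mpr hsub
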